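/- Let s > 0, K_x ≥ 0, let P be a real d×d matrix, and let x ∈ B_s^d with x ≠ 0, Px ≠ 0 and d_s(0, x) ≤ K_x. Then the Lorentz gamma factor of P^{⊗_s} x satisfies γ_{P^{⊗_s} x} = 1/√(1 − ‖P^{⊗_s} x‖²/s²) ≤ exp(‖P‖_F² · K_x² / (8s²)). -/

import Mathlib

open Real MeasureTheory

/-- Inverse hyperbolic tangent on `(-1, 1)`. -/
noncomputable def Real.artanhLocal (x : ℝ) : ℝ := (1 / 2) * Real.log ((1 + x) / (1 - x))

/-- Matrix-vector multiplication viewed as a map between Euclidean spaces. -/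
noncomputable def mulVecE {d d' : ℕ} (P : Matrix (Fin d') (Fin d) ℝ)
    (x : EuclideanSpace ℝ (Fin d)) : EuclideanSpace ℝ (Fin d') :=
  (EuclideanSpace.equiv (Fin d') ℝ).symm (P.mulVec (EuclideanSpace.equiv (Fin d) ℝ x))

/-- Möbius matrix multiplication `P^{⊗_s} x` on the Poincaré ball of radius `s`.
When `P.mulVec x = 0` this evaluates to `0`, as required. -/
noncomputable def mobiusMat {d d' : ℕ} (s : ℝ) (P : Matrix (Fin d') (Fin d) ℝ)
    (x : EuclideanSpace ℝ (Fin d)) : EuclideanSpace ℝ (Fin d') :=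
  (s * Real.tanh ((‖mulVecE P x‖ / ‖x‖) * Real.artanhLocal (‖x‖ / s)) / ‖mulVecE P x‖) • mulVecE P x

/-- Frobenius norm of a real matrix. -/
noncomputable def frobNorm {m n : ℕ} (P : Matrix (Fin m) (Fin n) ℝ) : ℝ :=
  Real.sqrt (∑ i, ∑ j, (P i j) ^ 2)

/-- Lorentz gamma factor `γ_x = 1/√(1 - ‖x‖²/s²)`. -/
noncomputable def lorentzGamma {d : ℕ} (s : ℝ) (x : EuclideanSpace ℝ (Fin d)) : ℝ :=
  1 / Real.sqrt (1 - ‖x‖ ^ 2 / s ^ 2)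

/-- Poincaré distance `d_s(x,y) = 2s·arsinh(γ_x γ_y ‖x - y‖ / s)`. -/
noncomputable def dPoin {d : ℕ} (s : ℝ) (x y : EuclideanSpace ℝ (Fin d)) : ℝ :=
  2 * s * Real.arsinh (lorentzGamma s x * lorentzGamma s y * ‖x - y‖ / s)

/-- Möbius addition on the Poincaré ball of radius `s`. -/
noncomputable def mobiusAdd {d : ℕ} (s : ℝ) (x y : EuclideanSpace ℝ (Fin d)) :
    EuclideanSpace ℝ (Fin d) :=
  ((1 + 2 / s ^ 2 * (inner ℝ x y : ℝ) + 1 / s ^ 2 * ‖y‖ ^ 2) /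
      (1 + 2 / s ^ 2 * (inner ℝ x y : ℝ) + 1 / s ^ 4 * ‖x‖ ^ 2 * ‖y‖ ^ 2)) • x +
    ((1 - 1 / s ^ 2 * ‖x‖ ^ 2) /
      (1 + 2 / s ^ 2 * (inner ℝ x y : ℝ) + 1 / s ^ 4 * ‖x‖ ^ 2 * ‖y‖ ^ 2)) • y

/-- Exponential map at the origin of the Poincaré ball of radius `s`. -/
noncomputable def expZero {d : ℕ} (s : ℝ) (v : EuclideanSpace ℝ (Fin d)) :
    EuclideanSpace ℝ (Fin d) :=
  (s * Real.tanh (‖v‖ / s) / ‖v‖) • v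

/-- Logarithmic map at the origin of the Poincaré ball of radius `s`. -/
noncomputable def logZero {d : ℕ} (s : ℝ) (y : EuclideanSpace ℝ (Fin d)) :
    EuclideanSpace ℝ (Fin d) :=
  (s * Real.artanhLocal (‖y‖ / s) / ‖y‖) • y


/-- Upper bound on the Lorentz gamma factor of `P^{⊗_s} x`. -/
theorem stmt5 {d : ℕ} (s Kx : ℝ) (hs : 0 < s) (hKx : 0 ≤ Kx)
    (P : Matrix (Fin d) (Fin d) ℝ) (x : EuclideanSpace ℝ (Fin d))
    (hx0 : x ≠ 0) (hxball : ‖x‖ < s) (hPx : mulVecE P x ≠ 0)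
    (hdx : 2 * s * Real.artanhLocal (‖x‖ / s) ≤ Kx) :
    lorentzGamma s (mobiusMat s P x) ≤ Real.exp (frobNorm P ^ 2 * Kx ^ 2 / (8 * s ^ 2)) := by

  classical
  -- notation
  set v : EuclideanSpace ℝ (Fin d) := mulVecE P x with hv
  set a : ℝ := Real.artanhLocal (‖x‖ / s) with ha
  set t : ℝ := (‖v‖ / ‖x‖) * a with htdef
  set F : ℝ := frobNorm P with hF
  have hxpos : 0 < ‖x‖ := norm_pos_iff.mpr hx0
  have hvpos : 0 < ‖v‖ := norm_pos_iff.mpr hPx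
  have hr0 : 0 ≤ ‖x‖ / s := div_nonneg (norm_nonneg x) hs.le
  have hr1 : ‖x‖ / s < 1 := (div_lt_one hs).mpr hxball
  -- artanh nonneg
  have ha0 : 0 ≤ a := by
    rw [ha, Real.artanhLocal]
    have h1 : (0:ℝ) < 1 - ‖x‖ / s := by linarith
    have : (1:ℝ) ≤ (1 + ‖x‖ / s) / (1 - ‖x‖ / s) := by
      rw [le_div_iff₀ h1]; linarith
    have := Real.log_nonneg this
    linarith
  have ht0 : 0 ≤ t := mul_nonneg (div_nonneg hvpos.le hxpos.le) ha0
  have hF0 : 0 ≤ F := Real.sqrt_nonneg _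
  -- Frobenius bound ‖v‖ ≤ F * ‖x‖
  have hFsq : F ^ 2 = ∑ i, ∑ j, (P i j) ^ 2 := by
    rw [hF, frobNorm, Real.sq_sqrt]
    positivity
  have hnormsq : ∀ (y : EuclideanSpace ℝ (Fin d)), ‖y‖ ^ 2 = ∑ i, (y i) ^ 2 := by
    intro y
    rw [EuclideanSpace.norm_eq, Real.sq_sqrt (by positivity)]
    simp [sq_abs]
  have hvcoord : ∀ i, v i = ∑ j, P i j * x j := by
    intro i
    simp [hv, mulVecE, Matrix.mulVec, dotProduct]
  have hvx : ‖v‖ ≤ F * ‖x‖ := by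
    have hsq : ‖v‖ ^ 2 ≤ F ^ 2 * ‖x‖ ^ 2 := by
      rw [hnormsq v, hnormsq x, hFsq, Finset.sum_mul]
      apply Finset.sum_le_sum
      intro i _
      rw [hvcoord i]
      exact Finset.sum_mul_sq_le_sq_mul_sq _ _ _
    calc ‖v‖ = Real.sqrt (‖v‖ ^ 2) := (Real.sqrt_sq (norm_nonneg v)).symm
      _ ≤ Real.sqrt (F ^ 2 * ‖x‖ ^ 2) := Real.sqrt_le_sqrt hsq
      _ = F * ‖x‖ := by
          rw [← mul_pow, Real.sqrt_sq (by positivity)]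
  -- bound on t
  have haK : a ≤ Kx / (2 * s) := by
    rw [le_div_iff₀ (by positivity)]
    linarith [hdx]
  have htK : t ≤ F * Kx / (2 * s) := by
    have h1 : ‖v‖ / ‖x‖ ≤ F := by
      rw [div_le_iff₀ hxpos]; exact hvx
    calc t ≤ F * a := mul_le_mul_of_nonneg_right h1 ha0
      _ ≤ F * (Kx / (2 * s)) := mul_le_mul_of_nonneg_left haK hF0
      _ = F * Kx / (2 * s) := by ring
  -- norm of mobiusMat
  have htanh0 : 0 ≤ Real.tanh t := by
    rw [Real.tanh_eq_sinh_div_cosh]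
    exact div_nonneg (Real.sinh_nonneg_iff.mpr ht0) (Real.cosh_pos t).le
  have hnorm : ‖mobiusMat s P x‖ = s * Real.tanh t := by
    have heq : mobiusMat s P x = (s * Real.tanh t / ‖v‖) • v := rfl
    rw [heq, norm_smul, Real.norm_eq_abs, abs_of_nonneg (by positivity),
      div_mul_cancel₀ _ hvpos.ne']
  -- gamma equals cosh t
  have hgamma : lorentzGamma s (mobiusMat s P x) = Real.cosh t := by
    rw [lorentzGamma, hnorm]
    have h1 : (s * Real.tanh t) ^ 2 / s ^ 2 = Real.tanh t ^ 2 := by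
      field_simp
    rw [h1]
    have hc := Real.cosh_pos t
    have h2 : 1 - Real.tanh t ^ 2 = 1 / Real.cosh t ^ 2 := by
      rw [Real.tanh_eq_sinh_div_cosh, div_pow]
      field_simp
      exact Real.cosh_sq_sub_sinh_sq t
    rw [h2, show (1:ℝ) / Real.cosh t ^ 2 = ((Real.cosh t)⁻¹) ^ 2 by
      rw [inv_pow]; ring]
    rw [Real.sqrt_sq (by positivity), one_div, inv_inv]
  rw [hgamma]
  calc Real.cosh t ≤ Real.exp (t ^ 2 / 2) := Real.cosh_le_exp_half_sq t
    _ ≤ Real.exp (F ^ 2 * Kx ^ 2 / (8 * s ^ 2)) := by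
        apply Real.exp_le_exp.mpr
        have h1 : t ^ 2 ≤ (F * Kx / (2 * s)) ^ 2 := by
          apply pow_le_pow_left₀ ht0 htK
        have h2 : (F * Kx / (2 * s)) ^ 2 = F ^ 2 * Kx ^ 2 / (4 * s ^ 2) := by
          field_simp; ring
        rw [h2] at h1
        have h3 : F ^ 2 * Kx ^ 2 / (4 * s ^ 2) / 2 = F ^ 2 * Kx ^ 2 / (8 * s ^ 2) := by ring
        linarith
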